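/- arXiv:2402.17143 — 2 statements merged into one kernel-verified Lean document; each statement's English description precedes it below -/
import Mathlib

section
/- Let F be a monotone subadditive quality cost with integer exponent α ≥ 1, let the predicted instance Ĵ be nonempty with 0 < OPT(Ĵ) < ∞, let 𝒥 be the true instance, let OfflineAlg be an optimal offline algorithm (γ_off = 1) and OnlineAlg be γ_on-competitive, and let λ ∈ (0,1). Then, for all values of the errors η₁ and η₂, the schedule S output by TPE with confidence parameter λ satisfies cost(S, 𝒥) ≤ max{ γ_on , (1 + γ_on·2^{2α}·λ^{1/α})/λ }·OPT(𝒥). -/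
/-! STATEMENT 2 (Corollary 3.5, robustness): with an optimal offline algorithm, TPE is max{γ_on, (1 + γ_on·2^{2α}·λ^{1/α})/λ}-robust, for all error values. -/

open MeasureTheory Finset
open scoped ENNReal BigOperators Classical

/-- A job: identifier, release time, processing time, weight. -/
structure Job where
  id : ℕ
  r : ℝ
  p : ℝ
  v : ℝ

noncomputable instance : DecidableEq Job := Classical.decEq _

/-- An instance is valid when release times are nonnegative and processing
times and weights are positive. -/
def ValidInstance (J : Finset Job) : Prop :=
  ∀ j ∈ J, 0 ≤ j.r ∧ 0 < j.p ∧ 0 < j.v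

/-- A schedule: speed functions for jobs. -/
abbrev Sched := Job → ℝ → ℝ

/-- `S` is a feasible schedule for the instance `J`. -/
def Feasible (J : Finset Job) (S : Sched) : Prop :=
  ∀ j ∈ J, Measurable (S j) ∧ (∀ t, 0 ≤ S j t) ∧ (∀ t, t < j.r → S j t = 0) ∧
    (∫ t in Set.Ici j.r, S j t) = j.p

/-- Work profile of job `j` under schedule `S`: remaining work at time `t`. -/
noncomputable def work (S : Sched) (j : Job) (t : ℝ) : ℝ :=
  j.p - ∫ u in Set.Icc j.r t, S j u

/-- Energy consumption of schedule `S` on instance `J`, with exponent `α`. -/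
noncomputable def energy (α : ℕ) (J : Finset Job) (S : Sched) : ℝ≥0∞ :=
  ∫⁻ t in Set.Ioi (0 : ℝ), ENNReal.ofReal ((∑ j ∈ J, S j t) ^ α)

/-- A quality cost function: depends only on the work profiles (and job
parameters), is subadditive, monotone in the work profiles, and monotone
under job-set inclusion. -/
structure QualityCost where
  F : Sched → Finset Job → ℝ≥0∞
  profile_congr : ∀ S S' J, (∀ j ∈ J, ∀ t, work S j t = work S' j t) → F S J = F S' J
  subadd : ∀ S J₁ J₂, Disjoint J₁ J₂ → F S (J₁ ∪ J₂) ≤ F S J₁ + F S J₂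
  mono_work : ∀ S S' J, (∀ j ∈ J, ∀ t, j.r ≤ t → work S j t ≤ work S' j t) → F S J ≤ F S' J
  mono_subset : ∀ S J' J, J' ⊆ J → F S J' ≤ F S J

/-- Total cost of a schedule: energy plus quality cost. -/
noncomputable def cost (Q : QualityCost) (α : ℕ) (S : Sched) (J : Finset Job) : ℝ≥0∞ :=
  energy α J S + Q.F S J

/-- Optimal (offline) cost of an instance. -/
noncomputable def OPT (Q : QualityCost) (α : ℕ) (J : Finset Job) : ℝ≥0∞ :=
  ⨅ (S : Sched) (_ : Feasible J S), cost Q α S J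

/-- Jobs of `J` released at or before time `t`. -/
noncomputable def restrictLE (J : Finset Job) (t : ℝ) : Finset Job :=
  J.filter fun j => j.r ≤ t

/-- Jobs of `J` released at or after time `t`. -/
noncomputable def restrictGE (J : Finset Job) (t : ℝ) : Finset Job :=
  J.filter fun j => t ≤ j.r

/-- `A` is a `γ`-competitive offline algorithm: on every instance it returns a
feasible schedule whose cost is between the optimum and `γ` times the optimum. -/
def OfflineCompetitive (Q : QualityCost) (α : ℕ) (γ : ℝ≥0∞) (A : Finset Job → Sched) : Prop :=
  ∀ K : Finset Job, ValidInstance K →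
    Feasible K (A K) ∧ OPT Q α K ≤ cost Q α (A K) K ∧ cost Q α (A K) K ≤ γ * OPT Q α K

/-- `A` is a `γ`-competitive online algorithm: on every instance it returns a
feasible schedule of cost at most `γ` times the optimum. -/
def OnlineCompetitive (Q : QualityCost) (α : ℕ) (γ : ℝ≥0∞) (A : Finset Job → Sched) : Prop :=
  ∀ K : Finset Job, ValidInstance K →
    Feasible K (A K) ∧ cost Q α (A K) K ≤ γ * OPT Q α K

/-- Cost `OFF(K)` achieved by the offline algorithm `Off` on instance `K`. -/
noncomputable def OFFcost (Q : QualityCost) (α : ℕ) (Off : Finset Job → Sched)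
    (K : Finset Job) : ℝ≥0∞ :=
  cost Q α (Off K) K

/-- `S` is the schedule output by the algorithm TPE with offline algorithm `Off`,
online algorithm `On`, prediction `Jhat`, true instance `J` and confidence `lam`:
either `OFF(𝒥_{≤t}) ≤ λ·OFF(Ĵ)` for all times `t ≥ 0` and TPE outputs `On(𝒥)`,
or TPE switches at the first time `t_λ` with `OFF(𝒥_{≤t_λ}) > λ·OFF(Ĵ)` and
outputs the combination of `OfflineAlg(Ĵ_{≥t_λ})` (for the correctly predicted
jobs `𝒥 ∩ Ĵ_{≥t_λ}`) and `OnlineAlg(𝒥 \ Ĵ_{≥t_λ})` (for all other jobs). -/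
def TPEOutput (Q : QualityCost) (α : ℕ) (Off On : Finset Job → Sched)
    (Jhat J : Finset Job) (lam : ℝ) (S : Sched) : Prop :=
  ((∀ t : ℝ, 0 ≤ t →
      OFFcost Q α Off (restrictLE J t) ≤ ENNReal.ofReal lam * OFFcost Q α Off Jhat) ∧
    S = On J) ∨
  (∃ tl : ℝ, 0 ≤ tl ∧
    ENNReal.ofReal lam * OFFcost Q α Off Jhat < OFFcost Q α Off (restrictLE J tl) ∧
    (∀ t : ℝ, 0 ≤ t →
      ENNReal.ofReal lam * OFFcost Q α Off Jhat < OFFcost Q α Off (restrictLE J t) → tl ≤ t) ∧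
    S = fun j t =>
      if j ∈ J ∩ restrictGE Jhat tl then Off (restrictGE Jhat tl) j t
      else On (J \ restrictGE Jhat tl) j t)


/- ### Auxiliary lemmas -/

lemma feasible_subset' {J' J : Finset Job} {S : Sched} (h : J' ⊆ J) (hF : Feasible J S) :
    Feasible J' S := fun j hj => hF j (h hj)

lemma energy_mono_set' (α : ℕ) {J' J : Finset Job} {S : Sched} (h : J' ⊆ J)
    (hnn : ∀ j ∈ J, ∀ t, 0 ≤ S j t) : energy α J' S ≤ energy α J S := by
  refine lintegral_mono fun t => ENNReal.ofReal_le_ofReal ?_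
  refine pow_le_pow_left₀ (Finset.sum_nonneg fun j hj => hnn j (h hj) t) ?_ α
  exact Finset.sum_le_sum_of_subset_of_nonneg h fun j hj _ => hnn j hj t

lemma OPT_le_cost' (Q : QualityCost) (α : ℕ) {J : Finset Job} {S : Sched} (hF : Feasible J S) :
    OPT Q α J ≤ cost Q α S J := iInf₂_le S hF

lemma OPT_mono' (Q : QualityCost) (α : ℕ) {J' J : Finset Job} (h : J' ⊆ J) :
    OPT Q α J' ≤ OPT Q α J := by
  refine le_iInf₂ fun S hF => ?_
  refine le_trans (OPT_le_cost' Q α (feasible_subset' h hF)) ?_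
  exact add_le_add (energy_mono_set' α h fun j hj t => (hF j hj).2.1 t) (Q.mono_subset S J' J h)

lemma OFF_eq_OPT' {Q : QualityCost} {α : ℕ} {Off : Finset Job → Sched}
    (hOff : OfflineCompetitive Q α 1 Off) {K : Finset Job} (hK : ValidInstance K) :
    OFFcost Q α Off K = OPT Q α K := by
  obtain ⟨-, h1, h2⟩ := hOff K hK
  exact le_antisymm (by simpa [OFFcost] using h2) h1

lemma valid_subset' {J' J : Finset Job} (h : J' ⊆ J) (hV : ValidInstance J) :
    ValidInstance J' := fun j hj => hV j (h hj)

/-- `(1+x)^n ≤ 1 + (2^n - 1) x` for `x ∈ [0,1]`. -/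
lemma one_add_pow_le' (n : ℕ) {x : ℝ} (h0 : 0 ≤ x) (h1 : x ≤ 1) :
    (1 + x) ^ n ≤ 1 + (2 ^ n - 1) * x := by
  induction n with
  | zero => simp
  | succ n ih =>
    have h2 : (0:ℝ) ≤ 2 ^ n - 1 := by
      have : (1:ℝ) ≤ 2 ^ n := one_le_pow₀ (by norm_num)
      linarith
    calc (1 + x) ^ (n + 1) = (1 + x) ^ n * (1 + x) := pow_succ _ _
      _ ≤ (1 + (2 ^ n - 1) * x) * (1 + x) := by
          apply mul_le_mul_of_nonneg_right ih (by linarith)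
      _ ≤ 1 + (2 ^ (n + 1) - 1) * x := by
          have e : (2:ℝ) ^ (n + 1) = 2 * 2 ^ n := by rw [pow_succ]; ring
          nlinarith [mul_nonneg (mul_nonneg h2 h0) (by linarith : (0:ℝ) ≤ 1 - x)]

/-- Weighted power-mean inequality:
`(a+b)^(β+1) ≤ (1+μ)^β a^(β+1) + (1+1/μ)^β b^(β+1)`. -/
lemma add_pow_le_weighted' (β : ℕ) {μ a b : ℝ} (hμ : 0 < μ) (ha : 0 ≤ a) (hb : 0 ≤ b) :
    (a + b) ^ (β + 1) ≤ (1 + μ) ^ β * a ^ (β + 1) + (1 + 1 / μ) ^ β * b ^ (β + 1) := by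
  have h1μ : (0:ℝ) < 1 + μ := by linarith
  have hw1 : (0:ℝ) ≤ 1 / (1 + μ) := by positivity
  have hw2 : (0:ℝ) ≤ μ / (1 + μ) := by positivity
  have hws : 1 / (1 + μ) + μ / (1 + μ) = 1 := by field_simp
  have hx : ((1 + μ) * a) ∈ Set.Ici (0:ℝ) := by
    simp only [Set.mem_Ici]; positivity
  have hy : (((1 + μ) / μ) * b) ∈ Set.Ici (0:ℝ) := by
    simp only [Set.mem_Ici]; positivity
  have h := (convexOn_pow (β + 1)).2 hx hy hw1 hw2 hws
  simp only [smul_eq_mul] at h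
  have heq : 1 / (1 + μ) * ((1 + μ) * a) + μ / (1 + μ) * (((1 + μ) / μ) * b) = a + b := by
    field_simp
  rw [heq] at h
  refine h.trans (le_of_eq ?_)
  have e1 : 1 / (1 + μ) * ((1 + μ) * a) ^ (β + 1) = (1 + μ) ^ β * a ^ (β + 1) := by
    rw [mul_pow, pow_succ (1 + μ) β]
    field_simp
  have e2 : μ / (1 + μ) * (((1 + μ) / μ) * b) ^ (β + 1) = (1 + 1 / μ) ^ β * b ^ (β + 1) := by
    have hμμ : (1:ℝ) + 1 / μ = (1 + μ) / μ := by field_simp; ring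
    rw [hμμ, mul_pow, div_pow, div_pow, pow_succ (1 + μ) β, pow_succ μ β]
    field_simp
  rw [e1, e2]

/-- Energy of a combined schedule splits with weighted coefficients. -/
lemma energy_combine' (β : ℕ) {μ : ℝ} (hμ : 0 < μ) (J A B : Finset Job)
    (S SA SB : Sched)
    (hsum : ∀ t, ∑ j ∈ J, S j t = (∑ j ∈ A, SA j t) + (∑ j ∈ B, SB j t))
    (hAnn : ∀ t, 0 ≤ ∑ j ∈ A, SA j t) (hBnn : ∀ t, 0 ≤ ∑ j ∈ B, SB j t)
    (hAm : Measurable fun t => ∑ j ∈ A, SA j t) :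
    energy (β + 1) J S ≤ ENNReal.ofReal ((1 + μ) ^ β) * energy (β + 1) A SA
      + ENNReal.ofReal ((1 + 1 / μ) ^ β) * energy (β + 1) B SB := by
  have hc1 : (0:ℝ) ≤ (1 + μ) ^ β := by positivity
  have hc2 : (0:ℝ) ≤ (1 + 1 / μ) ^ β := by positivity
  have step1 : energy (β + 1) J S ≤
      ∫⁻ t in Set.Ioi (0:ℝ),
        (ENNReal.ofReal ((1 + μ) ^ β * (∑ j ∈ A, SA j t) ^ (β + 1)) +
         ENNReal.ofReal ((1 + 1 / μ) ^ β * (∑ j ∈ B, SB j t) ^ (β + 1))) := by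
    refine lintegral_mono fun t => ?_
    rw [← ENNReal.ofReal_add (mul_nonneg hc1 (pow_nonneg (hAnn t) _))
      (mul_nonneg hc2 (pow_nonneg (hBnn t) _))]
    refine ENNReal.ofReal_le_ofReal ?_
    rw [hsum t]
    exact add_pow_le_weighted' β hμ (hAnn t) (hBnn t)
  refine step1.trans ?_
  have hmeas : Measurable fun t => ENNReal.ofReal ((1 + μ) ^ β * (∑ j ∈ A, SA j t) ^ (β + 1)) :=
    ENNReal.measurable_ofReal.comp ((hAm.pow_const (β + 1)).const_mul _)
  rw [lintegral_add_left hmeas]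
  apply add_le_add
  · rw [show (fun t => ENNReal.ofReal ((1 + μ) ^ β * (∑ j ∈ A, SA j t) ^ (β + 1))) =
      fun t => ENNReal.ofReal ((1 + μ) ^ β) * ENNReal.ofReal ((∑ j ∈ A, SA j t) ^ (β + 1))
      from funext fun t => ENNReal.ofReal_mul hc1]
    rw [lintegral_const_mul' _ _ ENNReal.ofReal_ne_top]
    exact le_rfl
  · rw [show (fun t => ENNReal.ofReal ((1 + 1/μ) ^ β * (∑ j ∈ B, SB j t) ^ (β + 1))) =
      fun t => ENNReal.ofReal ((1 + 1/μ) ^ β) * ENNReal.ofReal ((∑ j ∈ B, SB j t) ^ (β + 1))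
      from funext fun t => ENNReal.ofReal_mul hc2]
    rw [lintegral_const_mul' _ _ ENNReal.ofReal_ne_top]
    exact le_rfl

/-- **Corollary 3.5 (robustness).** If the offline algorithm is optimal
(`γ_off = 1`), then for any `λ ∈ (0,1)` and for all values of the errors
`η₁, η₂`, the schedule output by TPE satisfies
`cost(S,𝒥) ≤ max {γ_on, (1 + γ_on·2^{2α}·λ^{1/α})/λ}·OPT(𝒥)`. -/
theorem tpe_robustness (Q : QualityCost) (α : ℕ) (hα : 1 ≤ α)
    (γon : ℝ≥0∞) (Off On : Finset Job → Sched)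
    (hOff : OfflineCompetitive Q α 1 Off) (hOn : OnlineCompetitive Q α γon On)
    (Jhat J : Finset Job) (hJhatV : ValidInstance Jhat) (hJV : ValidInstance J)
    (hne : Jhat.Nonempty) (hpos : 0 < OPT Q α Jhat) (hfin : OPT Q α Jhat < ⊤)
    (lam : ℝ) (hlam0 : 0 < lam) (hlam1 : lam < 1)
    (S : Sched) (hS : TPEOutput Q α Off On Jhat J lam S) :
    cost Q α S J ≤
      max γon
          ((1 + γon * 2 ^ (2 * α) * ENNReal.ofReal lam ^ ((α : ℝ)⁻¹)) /
            ENNReal.ofReal lam) * OPT Q α J := by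
  rcases hS with ⟨-, rfl⟩ | ⟨tl, htl0, hswitch, -, rfl⟩
  · exact le_trans (hOn J hJV).2 (mul_le_mul_left (le_max_left _ _) _)
  -- switched case
  set G : Finset Job := restrictGE Jhat tl with hG
  have hGJhat : G ⊆ Jhat := Finset.filter_subset _ _
  have hGV : ValidInstance G := valid_subset' hGJhat hJhatV
  have hBV : ValidInstance (J \ G) := valid_subset' Finset.sdiff_subset hJV
  obtain ⟨hFeasG, hcostGle, hcostGopt⟩ := hOff G hGV
  obtain ⟨hFeasB, hcostB⟩ := hOn (J \ G) hBV
  set Shat : Sched := Off G with hShat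
  set Son : Sched := On (J \ G) with hSonDef
  set SS : Sched := fun j t => if j ∈ J ∩ G then Shat j t else Son j t with hSSdef
  set L : ℝ≥0∞ := ENNReal.ofReal lam with hLdef
  have hL0 : L ≠ 0 := by simp [hLdef, hlam0]
  have hLtop : L ≠ ⊤ := ENNReal.ofReal_ne_top
  -- lam * OPT(Jhat) ≤ OPT(J)
  have hLEopt : OFFcost Q α Off (restrictLE J tl) = OPT Q α (restrictLE J tl) :=
    OFF_eq_OPT' hOff (valid_subset' (Finset.filter_subset _ _) hJV)
  have hJhatopt : OFFcost Q α Off Jhat = OPT Q α Jhat := OFF_eq_OPT' hOff hJhatV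
  have hkey : L * OPT Q α Jhat ≤ OPT Q α J := by
    rw [← hJhatopt]
    refine le_trans (le_of_lt hswitch) ?_
    rw [hLEopt]
    exact OPT_mono' Q α (Finset.filter_subset _ _)
  have hJ0 : 0 < OPT Q α J :=
    lt_of_lt_of_le (ENNReal.mul_pos hL0 hpos.ne') hkey
  -- γon ≥ 1
  have hγ1 : 1 ≤ γon := by
    obtain ⟨hf, hc⟩ := hOn Jhat hJhatV
    have h1 : 1 * OPT Q α Jhat ≤ γon * OPT Q α Jhat := by
      rw [one_mul]; exact le_trans (OPT_le_cost' Q α hf) hc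
    exact (ENNReal.mul_le_mul_iff_left hpos.ne' hfin.ne).mp h1
  obtain ⟨β, rfl⟩ : ∃ β, α = β + 1 := ⟨α - 1, (Nat.succ_pred_eq_of_pos hα).symm⟩
  set μ : ℝ := lam ^ ((β + 1 : ℕ) : ℝ)⁻¹ with hμdef
  have hμ0 : 0 < μ := Real.rpow_pos_of_pos hlam0 _
  have hμ1 : μ ≤ 1 := Real.rpow_le_one hlam0.le hlam1.le (by positivity)
  have hμpow : μ ^ (β + 1) = lam := by
    rw [hμdef, ← Real.rpow_natCast (lam ^ (((β + 1 : ℕ) : ℝ))⁻¹) (β + 1),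
      ← Real.rpow_mul hlam0.le, inv_mul_cancel₀ (by positivity), Real.rpow_one]
  set c1 : ℝ := (1 + μ) ^ β with hc1def
  set c2 : ℝ := (1 + 1 / μ) ^ β with hc2def
  have hc1nn : (0:ℝ) ≤ c1 := by positivity
  have hc2nn : (0:ℝ) ≤ c2 := by positivity
  have hc1ge1 : (1:ℝ) ≤ c1 := one_le_pow₀ (by linarith)
  have hc2ge1 : (1:ℝ) ≤ c2 := one_le_pow₀ (by nlinarith [one_div_pos.mpr hμ0])
  -- the sum of speeds splits
  have hmemA : ∀ {j : Job}, j ∈ J ∩ G → SS j = Shat j := by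
    intro j hj
    funext u
    simp only [hSSdef]
    rw [if_pos hj]
  have hmemB : ∀ {j : Job}, j ∈ J \ G → SS j = Son j := by
    intro j hj
    funext u
    simp only [hSSdef]
    rw [if_neg]
    rw [Finset.mem_sdiff] at hj
    simp only [Finset.mem_inter]
    exact fun hc => hj.2 hc.2
  have hsum : ∀ t, ∑ j ∈ J, SS j t
      = (∑ j ∈ J ∩ G, Shat j t) + (∑ j ∈ J \ G, Son j t) := by
    intro t
    rw [← Finset.sum_inter_add_sum_sdiff J G (fun j => SS j t)]
    congr 1
    · exact Finset.sum_congr rfl fun j hj => by rw [hmemA hj]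
    · exact Finset.sum_congr rfl fun j hj => by rw [hmemB hj]
  have hAsubG : J ∩ G ⊆ G := Finset.inter_subset_right
  have hShatnn : ∀ j ∈ G, ∀ t, 0 ≤ Shat j t := fun j hj t => (hFeasG j hj).2.1 t
  have hSonnn : ∀ j ∈ J \ G, ∀ t, 0 ≤ Son j t := fun j hj t => (hFeasB j hj).2.1 t
  have hE : energy (β + 1) J SS ≤ ENNReal.ofReal c1 * energy (β + 1) (J ∩ G) Shat
      + ENNReal.ofReal c2 * energy (β + 1) (J \ G) Son :=
    energy_combine' β hμ0 J (J ∩ G) (J \ G) SS Shat Son hsum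
      (fun t => Finset.sum_nonneg fun j hj => hShatnn j (hAsubG hj) t)
      (fun t => Finset.sum_nonneg fun j hj => hSonnn j hj t)
      (Finset.measurable_sum _ fun j hj => (hFeasG j (hAsubG hj)).1)
  have hEA : energy (β + 1) (J ∩ G) Shat ≤ energy (β + 1) G Shat :=
    energy_mono_set' _ hAsubG hShatnn
  -- quality cost splits
  have hdisj : Disjoint (J ∩ G) (J \ G) :=
    Finset.disjoint_of_subset_left Finset.inter_subset_right Finset.disjoint_sdiff
  have hunion : (J ∩ G) ∪ (J \ G) = J := by
    ext j
    simp only [Finset.mem_union, Finset.mem_inter, Finset.mem_sdiff]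
    tauto
  have hFsplit : Q.F SS J ≤ Q.F SS (J ∩ G) + Q.F SS (J \ G) := by
    have h := Q.subadd SS (J ∩ G) (J \ G) hdisj
    rwa [hunion] at h
  have hFA : Q.F SS (J ∩ G) = Q.F Shat (J ∩ G) :=
    Q.profile_congr SS Shat _ fun j hj t => by rw [work, work, hmemA hj]
  have hFB : Q.F SS (J \ G) = Q.F Son (J \ G) :=
    Q.profile_congr SS Son _ fun j hj t => by rw [work, work, hmemB hj]
  have hFAG : Q.F Shat (J ∩ G) ≤ Q.F Shat G := Q.mono_subset _ _ _ hAsubG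
  have hone1 : (1:ℝ≥0∞) ≤ ENNReal.ofReal c1 := by
    rw [← ENNReal.ofReal_one]; exact ENNReal.ofReal_le_ofReal hc1ge1
  have hone2 : (1:ℝ≥0∞) ≤ ENNReal.ofReal c2 := by
    rw [← ENNReal.ofReal_one]; exact ENNReal.ofReal_le_ofReal hc2ge1
  have hcost : cost Q (β + 1) SS J ≤
      ENNReal.ofReal c1 * cost Q (β + 1) Shat G
        + ENNReal.ofReal c2 * cost Q (β + 1) Son (J \ G) := by
    unfold cost
    calc energy (β + 1) J SS + Q.F SS J
        ≤ (ENNReal.ofReal c1 * energy (β + 1) G Shat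
            + ENNReal.ofReal c2 * energy (β + 1) (J \ G) Son)
          + (Q.F Shat G + Q.F Son (J \ G)) := by
          refine add_le_add (hE.trans (add_le_add (mul_le_mul_right hEA _) le_rfl)) ?_
          refine hFsplit.trans ?_
          rw [hFA, hFB]
          exact add_le_add hFAG le_rfl
      _ ≤ _ := by
          rw [mul_add, mul_add]
          have h1 : Q.F Shat G ≤ ENNReal.ofReal c1 * Q.F Shat G :=
            le_mul_of_one_le_left zero_le hone1
          have h2 : Q.F Son (J \ G) ≤ ENNReal.ofReal c2 * Q.F Son (J \ G) :=
            le_mul_of_one_le_left zero_le hone2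
          calc (ENNReal.ofReal c1 * energy (β + 1) G Shat
                + ENNReal.ofReal c2 * energy (β + 1) (J \ G) Son)
                + (Q.F Shat G + Q.F Son (J \ G))
              ≤ (ENNReal.ofReal c1 * energy (β + 1) G Shat
                + ENNReal.ofReal c2 * energy (β + 1) (J \ G) Son)
                + (ENNReal.ofReal c1 * Q.F Shat G + ENNReal.ofReal c2 * Q.F Son (J \ G)) :=
                add_le_add le_rfl (add_le_add h1 h2)
            _ = _ := by ring
  have hcost2 : cost Q (β + 1) SS J ≤
      ENNReal.ofReal c1 * OPT Q (β + 1) Jhat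
        + ENNReal.ofReal c2 * (γon * OPT Q (β + 1) J) := by
    refine hcost.trans (add_le_add ?_ ?_)
    · refine mul_le_mul_right (hcostGopt.trans ?_) _
      rw [one_mul]
      exact OPT_mono' Q _ hGJhat
    · exact mul_le_mul_right
        (hcostB.trans (mul_le_mul_right (OPT_mono' Q _ Finset.sdiff_subset) _)) _
  refine hcost2.trans ?_
  refine le_trans ?_ (mul_le_mul_left (le_max_right _ _) _)
  -- infinite cases
  rcases eq_or_ne γon ⊤ with hγtop | hγtop
  · subst hγtop
    have hrpos : (0:ℝ≥0∞) < L ^ (((β + 1 : ℕ) : ℝ))⁻¹ :=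
      ENNReal.rpow_pos (lt_of_le_of_ne zero_le (Ne.symm hL0)) hLtop
    have hrw : ((1 + (⊤:ℝ≥0∞) * 2 ^ (2 * (β + 1)) * L ^ (((β + 1 : ℕ) : ℝ))⁻¹) / L) = ⊤ := by
      rw [ENNReal.top_mul (by positivity : (2:ℝ≥0∞) ^ (2 * (β + 1)) ≠ 0),
        ENNReal.top_mul hrpos.ne']
      simp [ENNReal.top_div_of_ne_top hLtop]
    rw [hrw, ENNReal.top_mul hJ0.ne']
    exact le_top
  rcases eq_or_ne (OPT Q (β + 1) J) ⊤ with hJtop | hJtop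
  · have hnum0 : ((1 + γon * 2 ^ (2 * (β + 1)) * L ^ (((β + 1 : ℕ) : ℝ))⁻¹) / L) ≠ 0 := by
      simp only [ne_eq, ENNReal.div_eq_zero_iff, hLtop, or_false]
      intro h
      have h1 := (add_eq_zero.mp h).1
      simp at h1
    rw [hJtop, ENNReal.mul_top hnum0]
    exact le_top
  -- finite case: pass to the reals
  have hLrpow : L ^ (((β + 1 : ℕ) : ℝ))⁻¹ = ENNReal.ofReal μ := by
    rw [hLdef, ENNReal.ofReal_rpow_of_pos hlam0]
  rw [hLrpow]
  rw [show (1 + γon * 2 ^ (2 * (β + 1)) * ENNReal.ofReal μ) / L * OPT Q (β + 1) J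
      = (1 + γon * 2 ^ (2 * (β + 1)) * ENNReal.ofReal μ) * OPT Q (β + 1) J / L from by
    rw [div_eq_mul_inv, div_eq_mul_inv, mul_right_comm]]
  rw [ENNReal.le_div_iff_mul_le (Or.inl hL0) (Or.inl hLtop)]
  have hPJh : OPT Q (β + 1) Jhat ≠ ⊤ := hfin.ne
  have h2top : ((2:ℝ≥0∞) ^ (2 * (β + 1))) ≠ ⊤ := ENNReal.pow_ne_top (by norm_num)
  have hXne : (ENNReal.ofReal c1 * OPT Q (β + 1) Jhat
      + ENNReal.ofReal c2 * (γon * OPT Q (β + 1) J)) * L ≠ ⊤ := by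
    refine ENNReal.mul_ne_top (ENNReal.add_ne_top.mpr ⟨?_, ?_⟩) hLtop
    · exact ENNReal.mul_ne_top ENNReal.ofReal_ne_top hPJh
    · exact ENNReal.mul_ne_top ENNReal.ofReal_ne_top (ENNReal.mul_ne_top hγtop hJtop)
  have hNne : (1 + γon * 2 ^ (2 * (β + 1)) * ENNReal.ofReal μ) * OPT Q (β + 1) J ≠ ⊤ := by
    refine ENNReal.mul_ne_top (ENNReal.add_ne_top.mpr ⟨ENNReal.one_ne_top, ?_⟩) hJtop
    exact ENNReal.mul_ne_top (ENNReal.mul_ne_top hγtop h2top) ENNReal.ofReal_ne_top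
  rw [← ENNReal.toReal_le_toReal hXne hNne]
  set p : ℝ := (OPT Q (β + 1) J).toReal with hpdef
  set ph : ℝ := (OPT Q (β + 1) Jhat).toReal with hphdef
  set g : ℝ := γon.toReal with hgdef
  have hp0 : 0 ≤ p := ENNReal.toReal_nonneg
  have hph0 : 0 ≤ ph := ENNReal.toReal_nonneg
  have hg1 : 1 ≤ g := by
    have := ENNReal.toReal_mono hγtop hγ1
    simpa [hgdef] using this
  have hlp : lam * ph ≤ p := by
    have := ENNReal.toReal_mono hJtop hkey
    rwa [ENNReal.toReal_mul, hLdef, ENNReal.toReal_ofReal hlam0.le] at this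
  have eL : (ENNReal.ofReal c1 * OPT Q (β + 1) Jhat
      + ENNReal.ofReal c2 * (γon * OPT Q (β + 1) J)) * L
      = ENNReal.ofReal ((c1 * ph + c2 * (g * p)) * lam) := by
    rw [hLdef, ← ENNReal.ofReal_toReal hPJh, ← ENNReal.ofReal_toReal hγtop,
      ← ENNReal.ofReal_toReal hJtop, ← ENNReal.ofReal_mul hc1nn,
      ← ENNReal.ofReal_mul ENNReal.toReal_nonneg, ← ENNReal.ofReal_mul hc2nn,
      ← ENNReal.ofReal_add (by positivity) (by positivity),
      ← ENNReal.ofReal_mul (by positivity)]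
  rw [eL, ENNReal.toReal_ofReal (by positivity)]
  have eR : ((1 + γon * 2 ^ (2 * (β + 1)) * ENNReal.ofReal μ) * OPT Q (β + 1) J).toReal
      = (1 + g * 2 ^ (2 * (β + 1)) * μ) * p := by
    rw [ENNReal.toReal_mul,
      ENNReal.toReal_add ENNReal.one_ne_top
        (ENNReal.mul_ne_top (ENNReal.mul_ne_top hγtop h2top) ENNReal.ofReal_ne_top),
      ENNReal.toReal_one, ENNReal.toReal_mul, ENNReal.toReal_mul, ENNReal.toReal_pow,
      ENNReal.toReal_ofNat, ENNReal.toReal_ofReal hμ0.le]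
  rw [eR]
  -- the concluding real-number inequality
  have hb1 : c1 ≤ 1 + (2 ^ β - 1) * μ := one_add_pow_le' β hμ0.le hμ1
  have hc2lam : c2 * lam ≤ 2 ^ β * μ := by
    have hinv1 : (1:ℝ) ≤ 1 / μ := (le_div_iff₀ hμ0).mpr (by linarith)
    have h2μ : 1 + 1 / μ ≤ 2 / μ := by
      rw [show (2:ℝ) / μ = 1 / μ + 1 / μ from by ring]
      linarith
    have hpow : c2 ≤ (2 / μ) ^ β := pow_le_pow_left₀ (by positivity) h2μ β
    have heq : (2 / μ) ^ β * lam = 2 ^ β * μ := by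
      rw [div_pow, ← hμpow, pow_succ]
      field_simp
    calc c2 * lam ≤ (2 / μ) ^ β * lam := mul_le_mul_of_nonneg_right hpow hlam0.le
      _ = 2 ^ β * μ := heq
  have key1 : c1 * ph * lam ≤ (1 + (2 ^ β - 1) * μ) * p := by
    have h1 : c1 * (lam * ph) ≤ c1 * p := mul_le_mul_of_nonneg_left hlp hc1nn
    have h2b : (1:ℝ) ≤ 2 ^ β := one_le_pow₀ (by norm_num)
    have h2 : c1 * p ≤ (1 + (2 ^ β - 1) * μ) * p := mul_le_mul_of_nonneg_right hb1 hp0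
    calc c1 * ph * lam = c1 * (lam * ph) := by ring
      _ ≤ c1 * p := h1
      _ ≤ _ := h2
  have key2 : c2 * (g * p) * lam ≤ 2 ^ β * μ * (g * p) := by
    have hgp : 0 ≤ g * p := mul_nonneg (by linarith) hp0
    calc c2 * (g * p) * lam = (c2 * lam) * (g * p) := by ring
      _ ≤ 2 ^ β * μ * (g * p) := mul_le_mul_of_nonneg_right hc2lam hgp
  have key3 : (1 + (2 ^ β - 1) * μ) * p + 2 ^ β * μ * (g * p)
      ≤ (1 + g * 2 ^ (2 * (β + 1)) * μ) * p := by
    have hpow : (2:ℝ) ^ (β + 1) ≤ 2 ^ (2 * (β + 1)) :=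
      pow_le_pow_right₀ (by norm_num) (by omega)
    have h2b : (1:ℝ) ≤ 2 ^ β := one_le_pow₀ (by norm_num)
    have e : (2:ℝ) ^ (β + 1) = 2 * 2 ^ β := by rw [pow_succ]; ring
    have hmp : 0 ≤ μ * p := mul_nonneg hμ0.le hp0
    have hstep1 : (2 ^ β - 1) * (μ * p) ≤ (2 ^ β - 1) * (μ * (g * p)) := by
      apply mul_le_mul_of_nonneg_left _ (by linarith)
      calc μ * p = μ * p * 1 := by ring
        _ ≤ μ * p * g := mul_le_mul_of_nonneg_left hg1 hmp
        _ = μ * (g * p) := by ring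
    have hstep2 : (2 * 2 ^ β) * (μ * (g * p)) ≤ 2 ^ (2 * (β + 1)) * (μ * (g * p)) := by
      apply mul_le_mul_of_nonneg_right _ (mul_nonneg hμ0.le (mul_nonneg (by linarith) hp0))
      rw [← e]; exact hpow
    nlinarith [hstep1, hstep2]
  calc (c1 * ph + c2 * (g * p)) * lam = c1 * ph * lam + c2 * (g * p) * lam := by ring
    _ ≤ (1 + (2 ^ β - 1) * μ) * p + 2 ^ β * μ * (g * p) := add_le_add key1 key2
    _ ≤ _ := key3
end

section
/- Let F be a monotone subadditive quality cost with integer exponent α ≥ 1, let Ĵ be a nonempty instance with 0 < OPT(Ĵ) < ∞, let 𝒥 be any instance, let OfflineAlg be γ_off-competitive, let λ ∈ (0,1] with λ·γ_off ≤ 1, and set η₂ = OPT(Ĵ \ 𝒥)/OPT(Ĵ). If OFF(𝒥) ≤ λ·OFF(Ĵ), then η₂ ≥ (1 − (λ·γ_off)^{1/α})^α. -/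
/-! STATEMENT 6 (Corollary 3.3, second part): if OFF(𝒥) ≤ λ·OFF(Ĵ) then η₂ ≥ (1 − (λγ_off)^{1/α})^α. -/

open MeasureTheory Finset
open scoped ENNReal BigOperators Classical

/-! ### Auxiliary lemmas -/

lemma opt_le_cost (Q : QualityCost) (α : ℕ) {K : Finset Job} {S : Sched}
    (hS : Feasible K S) : OPT Q α K ≤ cost Q α S K :=
  iInf₂_le S hS

/-- Two-point Minkowski inequality in `ℝ≥0∞`. -/
lemma two_point_minkowski {p : ℝ} (hp : 1 ≤ p) (a b u v : ℝ≥0∞) :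
    ((a + b) ^ p + (u + v) ^ p) ^ (1 / p) ≤
      (a ^ p + u ^ p) ^ (1 / p) + (b ^ p + v ^ p) ^ (1 / p) := by
  have h := ENNReal.Lp_add_le (Finset.univ : Finset (Fin 2)) ![a, u] ![b, v] hp
  simpa [Fin.sum_univ_two] using h

/-- Superadditivity step: `(e1^{1/p}+e2^{1/p})^p + (q1+q2) ≤ ((e1+q1)^{1/p}+(e2+q2)^{1/p})^p`. -/
lemma superadd_step {p : ℝ} (hp : 1 ≤ p) (e1 e2 q1 q2 : ℝ≥0∞) :
    (e1 ^ p⁻¹ + e2 ^ p⁻¹) ^ p + (q1 + q2) ≤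
      ((e1 + q1) ^ p⁻¹ + (e2 + q2) ^ p⁻¹) ^ p := by
  have hp0 : p ≠ 0 := by linarith
  have hrr : ∀ x : ℝ≥0∞, (x ^ p⁻¹) ^ p = x := fun x => ENNReal.rpow_inv_rpow hp0 x
  have h1 : q1 + q2 ≤ (q1 ^ p⁻¹ + q2 ^ p⁻¹) ^ p := by
    calc q1 + q2 = (q1 ^ p⁻¹) ^ p + (q2 ^ p⁻¹) ^ p := by rw [hrr, hrr]
      _ ≤ (q1 ^ p⁻¹ + q2 ^ p⁻¹) ^ p := ENNReal.add_rpow_le_rpow_add _ _ hp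
  have h2 := two_point_minkowski hp (e1 ^ p⁻¹) (e2 ^ p⁻¹) (q1 ^ p⁻¹) (q2 ^ p⁻¹)
  rw [hrr, hrr, hrr, hrr] at h2
  have h3 := ENNReal.rpow_le_rpow h2 (le_trans zero_le_one hp)
  rw [one_div, hrr] at h3
  calc (e1 ^ p⁻¹ + e2 ^ p⁻¹) ^ p + (q1 + q2)
      ≤ (e1 ^ p⁻¹ + e2 ^ p⁻¹) ^ p + (q1 ^ p⁻¹ + q2 ^ p⁻¹) ^ p := add_le_add_right h1 _
    _ ≤ ((e1 + q1) ^ p⁻¹ + (e2 + q2) ^ p⁻¹) ^ p := h3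

/-- Combining a schedule for `Ĵ \ 𝒥` with a schedule for `𝒥` bounds `OPT(Ĵ)`. -/
lemma opt_combine (Q : QualityCost) {α : ℕ} (hα : 1 ≤ α)
    (Jhat J : Finset Job) (S1 S2 : Sched)
    (h1 : Feasible (Jhat \ J) S1) (h2 : Feasible J S2) :
    OPT Q α Jhat ≤
      ((cost Q α S1 (Jhat \ J)) ^ ((α : ℝ)⁻¹) + (cost Q α S2 J) ^ ((α : ℝ)⁻¹)) ^ (α : ℝ) := by
  classical
  have hp0 : (α : ℝ) ≠ 0 := Nat.cast_ne_zero.2 (by omega)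
  have hp1 : (1 : ℝ) ≤ (α : ℝ) := by exact_mod_cast hα
  have hipnn : (0 : ℝ) ≤ (α : ℝ)⁻¹ := by positivity
  have hrr : ∀ x : ℝ≥0∞, (x ^ ((α : ℝ)⁻¹)) ^ (α : ℝ) = x :=
    fun x => ENNReal.rpow_inv_rpow hp0 x
  set S : Sched := fun j t => if j ∈ Jhat \ J then S1 j t else S2 j t with hSdef
  have hSfun1 : ∀ j ∈ Jhat \ J, S j = S1 j := fun j hj => funext fun t => if_pos hj
  have hSfun2 : ∀ j, j ∉ Jhat \ J → S j = S2 j := fun j hj => funext fun t => if_neg hj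
  have hfeas : Feasible Jhat S := by
    intro j hj
    by_cases hjD : j ∈ Jhat \ J
    · rw [hSfun1 j hjD]; exact h1 j hjD
    · rw [hSfun2 j hjD]
      have hjJ : j ∈ J := by
        by_contra hjJ
        exact hjD (Finset.mem_sdiff.2 ⟨hj, hjJ⟩)
      exact h2 j hjJ
  -- the two nonnegative speed sums
  set f : ℝ → ℝ := fun t => ∑ j ∈ Jhat \ J, S1 j t with hfdef
  set g : ℝ → ℝ := fun t => ∑ j ∈ J, S2 j t with hgdef
  have hfnn : ∀ t, 0 ≤ f t := fun t => Finset.sum_nonneg fun j hj => (h1 j hj).2.1 t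
  have hgnn : ∀ t, 0 ≤ g t := fun t => Finset.sum_nonneg fun j hj => (h2 j hj).2.1 t
  set F : ℝ → ℝ≥0∞ := fun t => ENNReal.ofReal (f t) with hFdef
  set G : ℝ → ℝ≥0∞ := fun t => ENNReal.ofReal (g t) with hGdef
  have hFmeas : Measurable F :=
    (Finset.measurable_sum _ fun j hj => (h1 j hj).1).ennreal_ofReal
  have hGmeas : Measurable G :=
    (Finset.measurable_sum _ fun j hj => (h2 j hj).1).ennreal_ofReal
  have hE1 : (∫⁻ t in Set.Ioi (0 : ℝ), F t ^ (α : ℝ)) = energy α (Jhat \ J) S1 := by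
    unfold energy
    refine lintegral_congr fun t => ?_
    rw [hFdef, ENNReal.rpow_natCast, ← ENNReal.ofReal_pow (hfnn t)]
  have hE2 : (∫⁻ t in Set.Ioi (0 : ℝ), G t ^ (α : ℝ)) = energy α J S2 := by
    unfold energy
    refine lintegral_congr fun t => ?_
    rw [hGdef, ENNReal.rpow_natCast, ← ENNReal.ofReal_pow (hgnn t)]
  -- pointwise energy bound
  have hES : energy α Jhat S ≤ ∫⁻ t in Set.Ioi (0 : ℝ), ((F + G) t) ^ (α : ℝ) := by
    unfold energy
    refine lintegral_mono fun t => ?_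
    have hs0 : (0 : ℝ) ≤ ∑ j ∈ Jhat, S j t :=
      Finset.sum_nonneg fun j hj => (hfeas j hj).2.1 t
    have hsplit : ∑ j ∈ Jhat, S j t
        = (∑ j ∈ Jhat \ J, S1 j t) + ∑ j ∈ Jhat ∩ J, S2 j t := by
      conv_lhs => rw [← Finset.sdiff_union_inter Jhat J]
      rw [Finset.sum_union (Finset.disjoint_sdiff_inter _ _)]
      congr 1
      · exact Finset.sum_congr rfl fun j hj => by rw [hSfun1 j hj]
      · exact Finset.sum_congr rfl fun j hj => by
          rw [hSfun2 j fun hD => (Finset.mem_sdiff.1 hD).2 (Finset.mem_inter.1 hj).2]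
    have hsum : ∑ j ∈ Jhat, S j t ≤ f t + g t := by
      rw [hsplit]
      refine add_le_add_right ?_ _
      exact Finset.sum_le_sum_of_subset_of_nonneg Finset.inter_subset_right
        fun j hj _ => (h2 j hj).2.1 t
    calc ENNReal.ofReal ((∑ j ∈ Jhat, S j t) ^ α)
        ≤ ENNReal.ofReal ((f t + g t) ^ α) :=
          ENNReal.ofReal_le_ofReal (pow_le_pow_left₀ hs0 hsum α)
      _ = ((F + G) t) ^ (α : ℝ) := by
          rw [ENNReal.ofReal_pow (add_nonneg (hfnn t) (hgnn t)),
            ENNReal.ofReal_add (hfnn t) (hgnn t), ← ENNReal.rpow_natCast]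
          rfl
  -- Minkowski
  have hmink := ENNReal.lintegral_Lp_add_le (μ := volume.restrict (Set.Ioi (0 : ℝ)))
      hFmeas.aemeasurable hGmeas.aemeasurable hp1
  rw [one_div] at hmink
  have hEbound : energy α Jhat S ≤
      ((energy α (Jhat \ J) S1) ^ ((α : ℝ)⁻¹) + (energy α J S2) ^ ((α : ℝ)⁻¹)) ^ (α : ℝ) := by
    refine hES.trans ?_
    calc (∫⁻ t in Set.Ioi (0 : ℝ), ((F + G) t) ^ (α : ℝ))
        = ((∫⁻ t in Set.Ioi (0 : ℝ), ((F + G) t) ^ (α : ℝ)) ^ ((α : ℝ)⁻¹)) ^ (α : ℝ) :=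
          (hrr _).symm
      _ ≤ (((∫⁻ t in Set.Ioi (0 : ℝ), F t ^ (α : ℝ)) ^ ((α : ℝ)⁻¹) +
            (∫⁻ t in Set.Ioi (0 : ℝ), G t ^ (α : ℝ)) ^ ((α : ℝ)⁻¹))) ^ (α : ℝ) :=
          ENNReal.rpow_le_rpow hmink (by positivity)
      _ = _ := by rw [hE1, hE2]
  -- quality bound
  have hq : Q.F S Jhat ≤ Q.F S1 (Jhat \ J) + Q.F S2 J := by
    have h0 : Q.F S Jhat ≤ Q.F S (Jhat \ J) + Q.F S (Jhat ∩ J) := by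
      conv_lhs => rw [← Finset.sdiff_union_inter Jhat J]
      exact Q.subadd S _ _ (Finset.disjoint_sdiff_inter _ _)
    have e1 : Q.F S (Jhat \ J) = Q.F S1 (Jhat \ J) :=
      Q.profile_congr _ _ _ fun j hj t => by unfold work; rw [hSfun1 j hj]
    have e2 : Q.F S (Jhat ∩ J) = Q.F S2 (Jhat ∩ J) :=
      Q.profile_congr _ _ _ fun j hj t => by
        unfold work
        rw [hSfun2 j fun hD => (Finset.mem_sdiff.1 hD).2 (Finset.mem_inter.1 hj).2]
    calc Q.F S Jhat ≤ Q.F S (Jhat \ J) + Q.F S (Jhat ∩ J) := h0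
      _ = Q.F S1 (Jhat \ J) + Q.F S2 (Jhat ∩ J) := by rw [e1, e2]
      _ ≤ Q.F S1 (Jhat \ J) + Q.F S2 J :=
          add_le_add_right (Q.mono_subset S2 _ _ Finset.inter_subset_right) _
  -- assemble
  calc OPT Q α Jhat ≤ cost Q α S Jhat := opt_le_cost Q α hfeas
    _ = energy α Jhat S + Q.F S Jhat := rfl
    _ ≤ ((energy α (Jhat \ J) S1) ^ ((α : ℝ)⁻¹) + (energy α J S2) ^ ((α : ℝ)⁻¹)) ^ (α : ℝ) +
        (Q.F S1 (Jhat \ J) + Q.F S2 J) := add_le_add hEbound hq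
    _ ≤ ((energy α (Jhat \ J) S1 + Q.F S1 (Jhat \ J)) ^ ((α : ℝ)⁻¹) +
          (energy α J S2 + Q.F S2 J) ^ ((α : ℝ)⁻¹)) ^ (α : ℝ) :=
        superadd_step hp1 _ _ _ _
    _ = _ := rfl

/-- The `1/α`-powers of the optima satisfy the triangle-type inequality. -/
lemma opt_rpow_le (Q : QualityCost) {α : ℕ} (hα : 1 ≤ α) (Jhat J : Finset Job) :
    (OPT Q α Jhat) ^ ((α : ℝ)⁻¹) ≤
      (OPT Q α (Jhat \ J)) ^ ((α : ℝ)⁻¹) + (OPT Q α J) ^ ((α : ℝ)⁻¹) := by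
  have hp0 : (α : ℝ) ≠ 0 := Nat.cast_ne_zero.2 (by omega)
  have hipnn : (0 : ℝ) ≤ (α : ℝ)⁻¹ := by positivity
  have hpnn : (0 : ℝ) ≤ (α : ℝ) := by positivity
  have hrr : ∀ x : ℝ≥0∞, (x ^ ((α : ℝ)⁻¹)) ^ (α : ℝ) = x :=
    fun x => ENNReal.rpow_inv_rpow hp0 x
  have hrr' : ∀ x : ℝ≥0∞, (x ^ (α : ℝ)) ^ ((α : ℝ)⁻¹) = x := fun x => by
    rw [← ENNReal.rpow_mul, mul_inv_cancel₀ hp0, ENNReal.rpow_one]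
  have key : ∀ S1, Feasible (Jhat \ J) S1 → ∀ S2, Feasible J S2 →
      (OPT Q α Jhat) ^ ((α : ℝ)⁻¹) ≤
        (cost Q α S1 (Jhat \ J)) ^ ((α : ℝ)⁻¹) + (cost Q α S2 J) ^ ((α : ℝ)⁻¹) := by
    intro S1 h1 S2 h2
    have h := ENNReal.rpow_le_rpow (opt_combine Q hα Jhat J S1 S2 h1 h2) hipnn
    rwa [hrr'] at h
  have hstep : (OPT Q α Jhat) ^ ((α : ℝ)⁻¹) ≤
      (⨅ (S : Sched) (_ : Feasible (Jhat \ J) S), (cost Q α S (Jhat \ J)) ^ ((α : ℝ)⁻¹)) +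
      (⨅ (S : Sched) (_ : Feasible J S), (cost Q α S J) ^ ((α : ℝ)⁻¹)) := by
    rw [ENNReal.iInf_add]
    refine le_iInf fun S1 => ?_
    rw [ENNReal.iInf_add]
    refine le_iInf fun h1 => ?_
    rw [ENNReal.add_iInf]
    refine le_iInf fun S2 => ?_
    rw [ENNReal.add_iInf]
    exact le_iInf fun h2 => key S1 h1 S2 h2
  refine hstep.trans (add_le_add ?_ ?_)
  · have hb : (⨅ (S : Sched) (_ : Feasible (Jhat \ J) S),
        (cost Q α S (Jhat \ J)) ^ ((α : ℝ)⁻¹)) ^ (α : ℝ) ≤ OPT Q α (Jhat \ J) := by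
      refine le_iInf fun S => le_iInf fun hS => ?_
      calc _ ≤ ((cost Q α S (Jhat \ J)) ^ ((α : ℝ)⁻¹)) ^ (α : ℝ) :=
            ENNReal.rpow_le_rpow (iInf₂_le S hS) hpnn
        _ = cost Q α S (Jhat \ J) := hrr _
    calc _ = ((⨅ (S : Sched) (_ : Feasible (Jhat \ J) S),
            (cost Q α S (Jhat \ J)) ^ ((α : ℝ)⁻¹)) ^ (α : ℝ)) ^ ((α : ℝ)⁻¹) := (hrr' _).symm
      _ ≤ (OPT Q α (Jhat \ J)) ^ ((α : ℝ)⁻¹) := ENNReal.rpow_le_rpow hb hipnn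
  · have hb : (⨅ (S : Sched) (_ : Feasible J S),
        (cost Q α S J) ^ ((α : ℝ)⁻¹)) ^ (α : ℝ) ≤ OPT Q α J := by
      refine le_iInf fun S => le_iInf fun hS => ?_
      calc _ ≤ ((cost Q α S J) ^ ((α : ℝ)⁻¹)) ^ (α : ℝ) :=
            ENNReal.rpow_le_rpow (iInf₂_le S hS) hpnn
        _ = cost Q α S J := hrr _
    calc _ = ((⨅ (S : Sched) (_ : Feasible J S),
            (cost Q α S J) ^ ((α : ℝ)⁻¹)) ^ (α : ℝ)) ^ ((α : ℝ)⁻¹) := (hrr' _).symm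
      _ ≤ (OPT Q α J) ^ ((α : ℝ)⁻¹) := ENNReal.rpow_le_rpow hb hipnn
/-- **Corollary 3.3 (second part).** If `OfflineAlg` is `γ_off`-competitive,
`λ·γ_off ≤ 1` and `OFF(𝒥) ≤ λ·OFF(Ĵ)`, then
`η₂ = OPT(Ĵ \ 𝒥)/OPT(Ĵ) ≥ (1 − (λγ_off)^{1/α})^α`. -/
theorem eta2_lower_bound (Q : QualityCost) (α : ℕ) (hα : 1 ≤ α)
    (γoff : ℝ≥0∞) (Off : Finset Job → Sched) (hOff : OfflineCompetitive Q α γoff Off)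
    (Jhat J : Finset Job) (hJhatV : ValidInstance Jhat) (hJV : ValidInstance J)
    (hne : Jhat.Nonempty) (hpos : 0 < OPT Q α Jhat) (hfin : OPT Q α Jhat < ⊤)
    (lam : ℝ) (hlam0 : 0 < lam) (hlam1 : lam ≤ 1)
    (hprod : ENNReal.ofReal lam * γoff ≤ 1)
    (η₂ : ℝ≥0∞) (hη₂ : η₂ = OPT Q α (Jhat \ J) / OPT Q α Jhat)
    (hswitch : OFFcost Q α Off J ≤ ENNReal.ofReal lam * OFFcost Q α Off Jhat) :
    (1 - (ENNReal.ofReal lam * γoff) ^ ((α : ℝ)⁻¹)) ^ (α : ℝ) ≤ η₂ := by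
  have hp0 : (α : ℝ) ≠ 0 := Nat.cast_ne_zero.2 (by omega)
  have hipnn : (0 : ℝ) ≤ (α : ℝ)⁻¹ := by positivity
  have hpnn : (0 : ℝ) ≤ (α : ℝ) := by positivity
  have hrr : ∀ x : ℝ≥0∞, (x ^ ((α : ℝ)⁻¹)) ^ (α : ℝ) = x :=
    fun x => ENNReal.rpow_inv_rpow hp0 x
  set A := OPT Q α Jhat with hA
  set B := OPT Q α (Jhat \ J) with hB
  set C := OPT Q α J with hC
  -- C ≤ (λ γ) A
  have hCle : C ≤ (ENNReal.ofReal lam * γoff) * A := by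
    have h1 : C ≤ OFFcost Q α Off J := (hOff J hJV).2.1
    have h2 : OFFcost Q α Off Jhat ≤ γoff * A := (hOff Jhat hJhatV).2.2
    calc C ≤ OFFcost Q α Off J := h1
      _ ≤ ENNReal.ofReal lam * OFFcost Q α Off Jhat := hswitch
      _ ≤ ENNReal.ofReal lam * (γoff * A) := mul_le_mul_right h2 _
      _ = (ENNReal.ofReal lam * γoff) * A := (mul_assoc _ _ _).symm
  set w := (ENNReal.ofReal lam * γoff) ^ ((α : ℝ)⁻¹) with hw
  set u := A ^ ((α : ℝ)⁻¹) with hu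
  have hutop : u ≠ ⊤ := ENNReal.rpow_ne_top_of_nonneg hipnn hfin.ne
  have hCu : C ^ ((α : ℝ)⁻¹) ≤ w * u := by
    calc C ^ ((α : ℝ)⁻¹) ≤ ((ENNReal.ofReal lam * γoff) * A) ^ ((α : ℝ)⁻¹) :=
          ENNReal.rpow_le_rpow hCle hipnn
      _ = w * u := by rw [ENNReal.mul_rpow_of_nonneg _ _ hipnn]
  have hchain : u ≤ B ^ ((α : ℝ)⁻¹) + w * u :=
    (opt_rpow_le Q hα Jhat J).trans (add_le_add_right hCu _)
  have h3 : u - w * u ≤ B ^ ((α : ℝ)⁻¹) := tsub_le_iff_right.2 hchain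
  have h4 : (1 - w) * u ≤ B ^ ((α : ℝ)⁻¹) := by
    rw [ENNReal.sub_mul fun _ _ => hutop, one_mul]
    exact h3
  have h5 : (1 - w) ^ (α : ℝ) * A ≤ B := by
    have := ENNReal.rpow_le_rpow h4 hpnn
    rwa [ENNReal.mul_rpow_of_nonneg _ _ hpnn, hrr, hrr] at this
  rw [hη₂]
  exact (ENNReal.le_div_iff_mul_le (Or.inl hpos.ne') (Or.inl hfin.ne)).2 h5
end
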